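/- For k > 0 and n ≥ 1, the X_1-Laguerre polynomials L̂_n^k satisfy the three-term recurrence (n+1)[(x+k)^2(n+k) - k] L̂_{n+2}^k + (n+k)[(x+k)^2(x-2n-k-1) + 2k] L̂_{n+1}^k + (n+k-1)[(x+k)^2(n+k+1) - k] L̂_n^k = 0. -/
import Mathlib


open Polynomial

/-- Classical generalized Laguerre polynomials L_n^{(k)}, defined by the
three-term recurrence (n+2) L_{n+2} = (2n+k+3 - x) L_{n+1} - (n+1+k) L_n,
with L_0 = 1, L_1 = k + 1 - x. -/
noncomputable def genLaguerre (k : ℝ) : ℕ → Polynomial ℝ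
  | 0 => 1
  | 1 => Polynomial.C (k + 1) - Polynomial.X
  | n + 2 =>
      Polynomial.C (1 / ((n : ℝ) + 2)) *
        ((Polynomial.C (2 * (n : ℝ) + k + 3) - Polynomial.X) * genLaguerre k (n + 1)
          - Polynomial.C ((n : ℝ) + 1 + k) * genLaguerre k n)

/-- X₁-Laguerre polynomial L̂_n^k = -(x+k+1) L_{n-1}^{(k)} + L_{n-2}^{(k)},
with the convention L_{-1}^{(k)} = 0 (so the last term is absent for n = 1). -/
noncomputable def hatL (k : ℝ) (n : ℕ) : Polynomial ℝ :=
  -(Polynomial.X + Polynomial.C (k + 1)) * genLaguerre k (n - 1)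
    + if 2 ≤ n then genLaguerre k (n - 2) else 0

lemma genLaguerre_rec (k : ℝ) (m : ℕ) :
    Polynomial.C ((m : ℝ) + 2) * genLaguerre k (m + 2)
      = (Polynomial.C (2 * (m : ℝ) + k + 3) - Polynomial.X) * genLaguerre k (m + 1)
        - Polynomial.C ((m : ℝ) + 1 + k) * genLaguerre k m := by
  rw [genLaguerre, ← mul_assoc, ← C_mul, mul_one_div, div_self (by positivity), C_1, one_mul]

/-- For k > 0 and n ≥ 1, the X₁-Laguerre polynomials satisfy the
three-term recurrence
(n+1)[(x+k)²(n+k) - k] L̂_{n+2}^k + (n+k)[(x+k)²(x-2n-k-1) + 2k] L̂_{n+1}^k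
+ (n+k-1)[(x+k)²(n+k+1) - k] L̂_n^k = 0. -/
theorem stmt_14 (k : ℝ) (hk : 0 < k) (n : ℕ) (hn : 1 ≤ n) :
    Polynomial.C ((n : ℝ) + 1) *
        ((Polynomial.X + Polynomial.C k) ^ 2 * Polynomial.C ((n : ℝ) + k)
          - Polynomial.C k) * hatL k (n + 2)
      + Polynomial.C ((n : ℝ) + k) *
          ((Polynomial.X + Polynomial.C k) ^ 2 *
              (Polynomial.X - Polynomial.C (2 * (n : ℝ) + k + 1))
            + Polynomial.C (2 * k)) * hatL k (n + 1)
      + Polynomial.C ((n : ℝ) + k - 1) *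
          ((Polynomial.X + Polynomial.C k) ^ 2 * Polynomial.C ((n : ℝ) + k + 1)
            - Polynomial.C k) * hatL k n = 0 := by
  match n, hn with
  | 1, _ =>
    apply Polynomial.funext
    intro y
    simp [hatL, genLaguerre]
    ring
  | (m + 2), _ =>
    have e2 : hatL k (m + 2 + 2)
        = -(Polynomial.X + Polynomial.C (k + 1)) * genLaguerre k (m + 3)
          + genLaguerre k (m + 2) := by simp [hatL]
    have e1 : hatL k (m + 2 + 1)
        = -(Polynomial.X + Polynomial.C (k + 1)) * genLaguerre k (m + 2)
          + genLaguerre k (m + 1) := by simp [hatL]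
    have e0 : hatL k (m + 2)
        = -(Polynomial.X + Polynomial.C (k + 1)) * genLaguerre k (m + 1)
          + genLaguerre k m := by simp [hatL]
    rw [e2, e1, e0]
    apply Polynomial.funext
    intro y
    have h1' := congrArg (Polynomial.eval y) (genLaguerre_rec k m)
    have h2' := congrArg (Polynomial.eval y) (genLaguerre_rec k (m + 1))
    simp only [eval_mul, eval_add, eval_sub, eval_neg, eval_C, eval_X, eval_pow,
      eval_zero] at h1' h2' ⊢
    push_cast at h1' h2' ⊢
    have hne : (((m : ℝ) + 2) * ((m : ℝ) + 3)) ≠ 0 := by positivity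
    refine (mul_eq_zero.mp ?_).resolve_left hne
    linear_combination
      (((m : ℝ) + 2) * (-(y + k + 1))
          * (((m : ℝ) + 3) * ((y + k) ^ 2 * ((m : ℝ) + 2 + k) - k))) * h2'
      + (((m : ℝ) + 3) * ((((m : ℝ) + 3) * ((y + k) ^ 2 * ((m : ℝ) + 2 + k) - k))
            - (y + k + 1) * (((m : ℝ) + 2 + k)
              * ((y + k) ^ 2 * (y - (2 * ((m : ℝ) + 2) + k + 1)) + 2 * k)))
          + (-(y + k + 1)) * (((m : ℝ) + 3) * ((y + k) ^ 2 * ((m : ℝ) + 2 + k) - k))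
            * (2 * ((m : ℝ) + 2) + k + 1 - y)) * h1'
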